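/- In a dagger category, a map f : A ⟶ B is †-Drazin if and only if the opposing pair (f, f†) is Drazin, i.e. there exist maps p : B ⟶ A and q : A ⟶ B such that: [DV.1] there exists k ∈ ℕ with (f ≫ f†)^k ≫ f ≫ p = (f ≫ f†)^k and (f† ≫ f)^k ≫ f† ≫ q = (f† ≫ f)^k; [DV.2] p ≫ f ≫ p = p and q ≫ f† ≫ q = q; [DV.3] f ≫ p = q ≫ f† and p ≫ f = f† ≫ q. Moreover, in this case p is the †-Drazin inverse of f and q = p†. -/
import Mathlib


open CategoryTheory

universe v u

/-- A dagger on a category: an identity-on-objects contravariant involution. -/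
structure Dagger (C : Type u) [Category.{v} C] where
  dag : ∀ {X Y : C}, (X ⟶ Y) → (Y ⟶ X)
  dag_id : ∀ X : C, dag (𝟙 X) = 𝟙 X
  dag_comp : ∀ {X Y Z : C} (f : X ⟶ Y) (g : Y ⟶ Z), dag (f ≫ g) = dag g ≫ dag f
  dag_dag : ∀ {X Y : C} (f : X ⟶ Y), dag (dag f) = f

/-- Iterated composition power of an endomorphism, with `cpow x 0 = 𝟙 A`. -/
def cpow {C : Type u} [Category.{v} C] {A : C} (x : A ⟶ A) : ℕ → (A ⟶ A)
  | 0 => 𝟙 A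
  | n + 1 => cpow x n ≫ x

/-- `p` is a †-Drazin inverse of `f`. -/
def IsDagDrazinInv {C : Type u} [Category.{v} C] (D : Dagger C)
    {A B : C} (f : A ⟶ B) (p : B ⟶ A) : Prop :=
  (∃ k : ℕ, cpow (f ≫ D.dag f) k ≫ f ≫ p = cpow (f ≫ D.dag f) k ∧
    p ≫ f ≫ cpow (D.dag f ≫ f) k = cpow (D.dag f ≫ f) k) ∧
  p ≫ f ≫ p = p ∧
  D.dag (f ≫ p) = f ≫ p ∧
  D.dag (p ≫ f) = p ≫ f

/-- `(p, q)` is a Drazin inverse of the opposing pair `(f, g)`. -/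
def IsOpposingDrazinInv {C : Type u} [Category.{v} C] {A B : C}
    (f : A ⟶ B) (g : B ⟶ A) (p : B ⟶ A) (q : A ⟶ B) : Prop :=
  (∃ k : ℕ, cpow (f ≫ g) k ≫ f ≫ p = cpow (f ≫ g) k ∧
    cpow (g ≫ f) k ≫ g ≫ q = cpow (g ≫ f) k) ∧
  (p ≫ f ≫ p = p ∧ q ≫ g ≫ q = q) ∧
  (f ≫ p = q ≫ g ∧ p ≫ f = g ≫ q)

/-! ### Auxiliary lemmas -/

private lemma idem_pow {M : Type*} [Monoid M] {e : M} (h : e * e = e) :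
    ∀ m : ℕ, e ^ (m + 1) = e := by
  intro m
  induction m with
  | zero => rw [pow_one]
  | succ m ih => rw [pow_succ, ih, h]

/-- Uniqueness of Drazin inverses in a monoid. -/
private theorem monoid_drazin_unique' {M : Type*} [Monoid M] {a b b' : M} {k k' : ℕ}
    (H1 : a ^ (k+1) * b = a ^ k) (H2 : b * a * b = b) (H3 : a * b = b * a)
    (H1' : a ^ (k'+1) * b' = a ^ k') (H2' : b' * a * b' = b') (H3' : a * b' = b' * a) :
    b = b' := by
  obtain ⟨N, hN⟩ : ∃ N, N = k + k' + 1 := ⟨_, rfl⟩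
  have hc : Commute a b := H3
  have hc' : Commute a b' := H3'
  have hP : a ^ (N+1) * b = a ^ N := by
    rw [show N + 1 = (k'+1) + (k+1) by omega, pow_add, mul_assoc, H1, ← pow_add,
      show k' + 1 + k = N by omega]
  have hP' : a ^ (N+1) * b' = a ^ N := by
    rw [show N + 1 = (k+1) + (k'+1) by omega, pow_add, mul_assoc, H1', ← pow_add,
      show k + 1 + k' = N by omega]
  have h3 : a ^ N * (a * b') = a ^ N := by rw [← mul_assoc, ← pow_succ]; exact hP'
  have h4 : a ^ N * (a * b) = a ^ N := by rw [← mul_assoc, ← pow_succ]; exact hP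
  have h1 : (a*b) * b = b := by rw [H3]; exact H2
  have h2 : b' * (a*b') = b' := by rw [← mul_assoc]; exact H2'
  have hee : (a*b) * (a*b) = a*b := by
    calc (a*b) * (a*b) = a * (b*a*b) := by simp only [mul_assoc]
    _ = a * b := by rw [H2]
  have hee' : (a*b') * (a*b') = a*b' := by
    calc (a*b') * (a*b') = a * (b'*a*b') := by simp only [mul_assoc]
    _ = a * b' := by rw [H2']
  have hEn : (a*b) ^ N = a*b := by
    rw [show N = (k + k') + 1 from hN]; exact idem_pow hee _
  have hE'n : (a*b') ^ N = a*b' := by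
    rw [show N = (k + k') + 1 from hN]; exact idem_pow hee' _
  have hcomm' : Commute (a*b') (a ^ N) := (((Commute.refl a).mul_right hc').symm).pow_right N
  have hmp : (a*b) ^ N = a ^ N * b ^ N := hc.mul_pow N
  have hmp' : (a*b') ^ N = b' ^ N * a ^ N := by rw [H3', hc'.symm.mul_pow]
  have chainA : b = (a*b') * b := by
    calc b = (a*b) * b := h1.symm
    _ = (a*b) ^ N * b := by rw [hEn]
    _ = a ^ N * b ^ N * b := by rw [hmp]
    _ = (a ^ N * (a*b')) * (b ^ N * b) := by rw [h3]; simp only [mul_assoc]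
    _ = (a*b') * (a ^ N * (b ^ N * b)) := by rw [hcomm'.symm.eq]; simp only [mul_assoc]
    _ = (a*b') * ((a*b) ^ N * b) := by rw [hmp]; simp only [mul_assoc]
    _ = (a*b') * ((a*b) * b) := by rw [hEn]
    _ = (a*b') * b := by rw [h1]
  have chainB : b' = b' * (a*b) := by
    calc b' = b' * (a*b') := h2.symm
    _ = b' * (a*b') ^ N := by rw [hE'n]
    _ = b' * (b' ^ N * a ^ N) := by rw [hmp']
    _ = b' * (b' ^ N * (a ^ N * (a*b))) := by rw [h4]
    _ = b' * (a*b') ^ N * (a*b) := by rw [hmp']; simp only [mul_assoc]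
    _ = b' * (a*b') * (a*b) := by rw [hE'n]
    _ = b' * (a*b) := by rw [h2]
  calc b = (a*b') * b := chainA
  _ = b' * (a * b) := by rw [H3']; simp only [mul_assoc]
  _ = b' := chainB.symm

section CatAux

variable {C : Type u} [Category.{v} C]

private lemma cpow_eq_pow {A : C} (x : A ⟶ A) (n : ℕ) : cpow x n = (End.of x) ^ n := by
  induction n with
  | zero => rw [pow_zero]; rfl
  | succ n ih =>
    show cpow x n ≫ x = (End.of x) ^ (n+1)
    rw [pow_succ', ih]; rfl

/-- Uniqueness of Drazin inverses of endomorphisms. -/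
private lemma drazinE_unique {A : C} {a b b' : A ⟶ A}
    (hk : ∃ k, cpow a (k+1) ≫ b = cpow a k) (h2 : b ≫ a ≫ b = b) (h3 : a ≫ b = b ≫ a)
    (hk' : ∃ k, cpow a (k+1) ≫ b' = cpow a k) (h2' : b' ≫ a ≫ b' = b') (h3' : a ≫ b' = b' ≫ a) :
    b = b' := by
  obtain ⟨k, H1⟩ := hk
  obtain ⟨k', H1'⟩ := hk'
  have hc : Commute (End.of a) (End.of b) := h3.symm
  have hc' : Commute (End.of a) (End.of b') := h3'.symm
  refine monoid_drazin_unique' (M := End A) (a := End.of a) (b := End.of b) (b' := End.of b')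
    (k := k) (k' := k') ?_ ?_ hc.eq ?_ ?_ hc'.eq
  · calc (End.of a) ^ (k+1) * (End.of b) = (End.of b) * (End.of a) ^ (k+1) :=
        (hc.pow_left (k+1)).eq
    _ = cpow a (k+1) ≫ b := by rw [cpow_eq_pow]; rfl
    _ = cpow a k := H1
    _ = (End.of a) ^ k := cpow_eq_pow a k
  · show b ≫ (a ≫ b) = b
    rw [← Category.assoc] at h2 ⊢
    exact h2
  · calc (End.of a) ^ (k'+1) * (End.of b') = (End.of b') * (End.of a) ^ (k'+1) :=
        (hc'.pow_left (k'+1)).eq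
    _ = cpow a (k'+1) ≫ b' := by rw [cpow_eq_pow]; rfl
    _ = cpow a k' := H1'
    _ = (End.of a) ^ k' := cpow_eq_pow a k'
  · show b' ≫ (a ≫ b') = b'
    rw [← Category.assoc] at h2' ⊢
    exact h2'

private lemma comm_cpow {A : C} {u x : A ⟶ A} (h : u ≫ x = x ≫ u) (n : ℕ) :
    u ≫ cpow x n = cpow x n ≫ u := by
  induction n with
  | zero => show u ≫ 𝟙 A = 𝟙 A ≫ u; simp
  | succ n ih =>
    show u ≫ cpow x n ≫ x = (cpow x n ≫ x) ≫ u
    rw [← Category.assoc, ih, Category.assoc, h, ← Category.assoc]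

private lemma dag_cpow (D : Dagger C) {A : C} (x : A ⟶ A) (n : ℕ) :
    D.dag (cpow x n) = cpow (D.dag x) n := by
  induction n with
  | zero => show D.dag (𝟙 A) = 𝟙 A; exact D.dag_id A
  | succ n ih =>
    show D.dag (cpow x n ≫ x) = cpow (D.dag x) n ≫ D.dag x
    rw [D.dag_comp, ih]
    exact comm_cpow rfl n

private lemma dag_inj (D : Dagger C) {X Y : C} {u v : X ⟶ Y} (h : D.dag u = D.dag v) : u = v := by
  rw [← D.dag_dag u, h, D.dag_dag]

variable {A B : C} {f : A ⟶ B} {g : B ⟶ A} {p : B ⟶ A} {q : A ⟶ B}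

private lemma opp_symm (h : IsOpposingDrazinInv f g p q) : IsOpposingDrazinInv g f q p := by
  obtain ⟨⟨k, h1a, h1b⟩, ⟨h2a, h2b⟩, h3a, h3b⟩ := h
  exact ⟨⟨k, h1b, h1a⟩, ⟨h2b, h2a⟩, h3b.symm, h3a.symm⟩

private lemma opp_flip1 {k : ℕ} (h3a : f ≫ p = q ≫ g) (h3b : p ≫ f = g ≫ q)
    (h1a : cpow (f ≫ g) k ≫ f ≫ p = cpow (f ≫ g) k) :
    (f ≫ p) ≫ cpow (f ≫ g) k = cpow (f ≫ g) k := by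
  have comm : (f ≫ p) ≫ (f ≫ g) = (f ≫ g) ≫ (f ≫ p) := by
    calc (f ≫ p) ≫ (f ≫ g) = f ≫ (p ≫ f) ≫ g := by simp only [Category.assoc]
    _ = f ≫ (g ≫ q) ≫ g := by rw [h3b]
    _ = (f ≫ g) ≫ (q ≫ g) := by simp only [Category.assoc]
    _ = (f ≫ g) ≫ (f ≫ p) := by rw [← h3a]
  rw [comm_cpow comm k]
  exact h1a

private lemma opp_qp_comm (h3a : f ≫ p = q ≫ g) (h3b : p ≫ f = g ≫ q) :
    (f ≫ g) ≫ (q ≫ p) = (q ≫ p) ≫ (f ≫ g) := by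
  have e1 : (f ≫ g) ≫ (q ≫ p) = (f ≫ p) ≫ (f ≫ p) := by
    calc (f ≫ g) ≫ (q ≫ p) = f ≫ (g ≫ q) ≫ p := by simp only [Category.assoc]
    _ = f ≫ (p ≫ f) ≫ p := by rw [← h3b]
    _ = (f ≫ p) ≫ (f ≫ p) := by simp only [Category.assoc]
  have e2 : (q ≫ p) ≫ (f ≫ g) = (f ≫ p) ≫ (f ≫ p) := by
    calc (q ≫ p) ≫ (f ≫ g) = q ≫ (p ≫ f) ≫ g := by simp only [Category.assoc]
    _ = q ≫ (g ≫ q) ≫ g := by rw [h3b]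
    _ = (q ≫ g) ≫ (q ≫ g) := by simp only [Category.assoc]
    _ = (f ≫ p) ≫ (f ≫ p) := by rw [← h3a]
  rw [e1, e2]

private lemma opp_qp_mid (h2b : q ≫ g ≫ q = q) (h3b : p ≫ f = g ≫ q) :
    (q ≫ p) ≫ (f ≫ g) ≫ (q ≫ p) = q ≫ p := by
  calc (q ≫ p) ≫ (f ≫ g) ≫ (q ≫ p) = q ≫ (p ≫ f) ≫ (g ≫ q) ≫ p := by
        simp only [Category.assoc]
  _ = q ≫ (g ≫ q) ≫ (g ≫ q) ≫ p := by rw [h3b]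
  _ = ((q ≫ g ≫ q) ≫ g ≫ q) ≫ p := by simp only [Category.assoc]
  _ = q ≫ p := by rw [h2b, h2b]

private lemma opp_qp_pow {k : ℕ} (h1a : cpow (f ≫ g) k ≫ f ≫ p = cpow (f ≫ g) k)
    (h2a : p ≫ f ≫ p = p) (h3b : p ≫ f = g ≫ q) :
    cpow (f ≫ g) (k+1) ≫ (q ≫ p) = cpow (f ≫ g) k := by
  show (cpow (f ≫ g) k ≫ (f ≫ g)) ≫ (q ≫ p) = cpow (f ≫ g) k
  calc (cpow (f ≫ g) k ≫ (f ≫ g)) ≫ (q ≫ p)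
      = cpow (f ≫ g) k ≫ f ≫ (g ≫ q) ≫ p := by simp only [Category.assoc]
  _ = cpow (f ≫ g) k ≫ f ≫ (p ≫ f) ≫ p := by rw [← h3b]
  _ = cpow (f ≫ g) k ≫ f ≫ (p ≫ f ≫ p) := by simp only [Category.assoc]
  _ = cpow (f ≫ g) k ≫ f ≫ p := by rw [h2a]
  _ = cpow (f ≫ g) k := h1a

private lemma opp_p_eq (h2a : p ≫ f ≫ p = p) (h3b : p ≫ f = g ≫ q) :
    p = g ≫ q ≫ p := by
  rw [← Category.assoc, ← h3b, Category.assoc, h2a]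

private lemma opp_unique_p {p' : B ⟶ A} {q' : A ⟶ B}
    (h : IsOpposingDrazinInv f g p q) (h' : IsOpposingDrazinInv f g p' q') : p = p' := by
  obtain ⟨⟨k, h1a, h1b⟩, ⟨h2a, h2b⟩, h3a, h3b⟩ := h
  obtain ⟨⟨k', h1a', h1b'⟩, ⟨h2a', h2b'⟩, h3a', h3b'⟩ := h'
  have e : q ≫ p = q' ≫ p' :=
    drazinE_unique ⟨k, opp_qp_pow h1a h2a h3b⟩ (opp_qp_mid h2b h3b) (opp_qp_comm h3a h3b)
      ⟨k', opp_qp_pow h1a' h2a' h3b'⟩ (opp_qp_mid h2b' h3b') (opp_qp_comm h3a' h3b')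
  rw [opp_p_eq h2a h3b, opp_p_eq h2a' h3b', e]

end CatAux

/-- `f` is †-Drazin iff the opposing pair `(f, f†)` is Drazin; moreover in this case the
pair consists of the †-Drazin inverse of `f` and its adjoint. -/
theorem dagDrazin_iff_opposingPair_drazin {C : Type u} [Category.{v} C] (D : Dagger C)
    {A B : C} (f : A ⟶ B) :
    ((∃ p : B ⟶ A, IsDagDrazinInv D f p) ↔
      ∃ (p : B ⟶ A) (q : A ⟶ B), IsOpposingDrazinInv f (D.dag f) p q) ∧
    (∀ (p : B ⟶ A) (q : A ⟶ B), IsOpposingDrazinInv f (D.dag f) p q →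
      IsDagDrazinInv D f p ∧ q = D.dag p) := by
  have main : ∀ (p : B ⟶ A) (q : A ⟶ B), IsOpposingDrazinInv f (D.dag f) p q →
      IsDagDrazinInv D f p ∧ q = D.dag p := by
    intro p q h
    obtain ⟨⟨k, h1a, h1b⟩, ⟨h2a, h2b⟩, h3a, h3b⟩ := h
    have hf1 : (f ≫ p) ≫ cpow (f ≫ D.dag f) k = cpow (f ≫ D.dag f) k :=
      opp_flip1 h3a h3b h1a
    have hf2 : (D.dag f ≫ q) ≫ cpow (D.dag f ≫ f) k = cpow (D.dag f ≫ f) k :=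
      opp_flip1 h3b.symm h3a.symm h1b
    have hD1b : p ≫ f ≫ cpow (D.dag f ≫ f) k = cpow (D.dag f ≫ f) k := by
      rw [← Category.assoc, h3b]
      exact hf2
    have hdag : IsOpposingDrazinInv f (D.dag f) (D.dag q) (D.dag p) := by
      refine ⟨⟨k, ?_, ?_⟩, ⟨?_, ?_⟩, ?_, ?_⟩
      · apply dag_inj D
        simp only [D.dag_comp, dag_cpow, D.dag_dag, Category.assoc]
        rw [← Category.assoc, ← h3a]
        exact hf1
      · apply dag_inj D
        simp only [D.dag_comp, dag_cpow, D.dag_dag, Category.assoc]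
        exact hD1b
      · apply dag_inj D
        simp only [D.dag_comp, dag_cpow, D.dag_dag, Category.assoc]
        exact h2b
      · apply dag_inj D
        simp only [D.dag_comp, dag_cpow, D.dag_dag, Category.assoc]
        exact h2a
      · apply dag_inj D
        simp only [D.dag_comp, dag_cpow, D.dag_dag, Category.assoc]
        exact h3a.symm
      · apply dag_inj D
        simp only [D.dag_comp, dag_cpow, D.dag_dag, Category.assoc]
        exact h3b.symm
    have hrebuilt : IsOpposingDrazinInv f (D.dag f) p q :=
      ⟨⟨k, h1a, h1b⟩, ⟨h2a, h2b⟩, h3a, h3b⟩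
    have hq : q = D.dag p := opp_unique_p (opp_symm hrebuilt) (opp_symm hdag)
    refine ⟨⟨⟨k, h1a, hD1b⟩, h2a, ?_, ?_⟩, hq⟩
    · rw [D.dag_comp, ← hq]
      exact h3a.symm
    · rw [D.dag_comp, ← hq]
      exact h3b.symm
  refine ⟨⟨?_, ?_⟩, main⟩
  · rintro ⟨p, ⟨⟨k, e1, e2⟩, e3, e4, e5⟩⟩
    refine ⟨p, D.dag p, ⟨k, e1, ?_⟩, ⟨e3, ?_⟩, ?_, ?_⟩
    · apply dag_inj D
      simp only [D.dag_comp, dag_cpow, D.dag_dag, Category.assoc]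
      exact e2
    · apply dag_inj D
      simp only [D.dag_comp, dag_cpow, D.dag_dag, Category.assoc]
      exact e3
    · rw [← D.dag_comp]
      exact e4.symm
    · rw [← D.dag_comp]
      exact e5.symm
  · rintro ⟨p, q, h⟩
    exact ⟨p, (main p q h).1⟩
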